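/- Let E be a real inner product space and F : E → ℝ a differentiable function whose gradient ∇F is L-Lipschitz for some L > 0, and suppose F is bounded below: F(x) ≥ F_* for all x ∈ E. Fix β ∈ (0,1) and set γ = 1 + β²/(1−β). Let Θ, g, m : ℕ → E and η : ℕ → ℝ satisfy m_0 = 0, m_{t+1} = β·m_t + g_t, Θ_{t+1} = Θ_t − η_t·((1−β)·g_t + β·m_{t+1}), with 0 < η_m ≤ η_t ≤ η_0 ≤ (γ−β²)/(6Lγ²) for all t. Suppose there is B ≥ 0 such that for all t, ‖g_t − ∇F(Θ_t)‖² ≤ B and ‖m_t − g_t/(1−β)‖² ≤ B. Then for every T ≥ 1: min over 0 ≤ t < T of ‖∇F(Θ_t)‖² ≤ (4(F(Θ_0) − F_*)/(η_m·T))·(1 + 1/(1−β)) + (η_0/(η_m·β³))·(6 + 24L·η_0 + 24L·η_0/(1−β)²)·B. -/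

import Mathlib

set_option maxHeartbeats 4000000

open Finset intervalIntegral InnerProductSpace

lemma descent_lemma
    {E : Type*} [NormedAddCommGroup E] [InnerProductSpace ℝ E] [CompleteSpace E]
    (F : E → ℝ) (L : ℝ) (hL : 0 ≤ L)
    (hF : Differentiable ℝ F)
    (hLip : ∀ x y : E, ‖gradient F x - gradient F y‖ ≤ L * ‖x - y‖)
    (x y : E) :
    F y ≤ F x + inner ℝ (gradient F x) (y - x) + L / 2 * ‖y - x‖ ^ 2 := by
  set h : E := y - x with hh
  have hline : ∀ s : ℝ, HasDerivAt (fun s : ℝ => x + s • h) h s := by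
    intro s
    simpa using ((hasDerivAt_id s).smul_const h).const_add x
  have hphi : ∀ s : ℝ, HasDerivAt (fun s : ℝ => F (x + s • h))
      (inner ℝ (gradient F (x + s • h)) h : ℝ) s := by
    intro s
    have hfd : HasFDerivAt F (toDual ℝ E (gradient F (x + s • h))) (x + s • h) :=
      (hF _).hasGradientAt.hasFDerivAt
    simpa [Function.comp_def] using hfd.comp_hasDerivAt s (hline s)
  have hgradcont : Continuous (gradient F) := by
    have : LipschitzWith (Real.toNNReal L) (gradient F) := by
      apply LipschitzWith.of_dist_le_mul
      intro a b
      simpa [dist_eq_norm, Real.coe_toNNReal L hL] using hLip a b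
    exact this.continuous
  have hcont : Continuous fun s : ℝ => (inner ℝ (gradient F (x + s • h)) h : ℝ) := by
    apply Continuous.inner
    · exact hgradcont.comp (by continuity)
    · exact continuous_const
  have hFTC : F y - F x = ∫ s in (0:ℝ)..1, (inner ℝ (gradient F (x + s • h)) h : ℝ) := by
    have := integral_eq_sub_of_hasDerivAt (f := fun s : ℝ => F (x + s • h))
      (fun s _ => hphi s) (hcont.intervalIntegrable 0 1)
    simp only [one_smul, zero_smul, add_zero] at this
    rw [this, hh]
    congr 1 <;> simp [hh]
  have hmono : (∫ s in (0:ℝ)..1, (inner ℝ (gradient F (x + s • h)) h : ℝ))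
      ≤ ∫ s in (0:ℝ)..1, ((inner ℝ (gradient F x) h : ℝ) + L * s * ‖h‖ ^ 2) := by
    apply integral_mono_on (by norm_num) (hcont.intervalIntegrable 0 1)
    · exact (by continuity : Continuous fun s : ℝ =>
        ((inner ℝ (gradient F x) h : ℝ) + L * s * ‖h‖ ^ 2)).intervalIntegrable 0 1
    · intro s hs
      have h1 : (inner ℝ (gradient F (x + s • h)) h : ℝ) - inner ℝ (gradient F x) h
          = inner ℝ (gradient F (x + s • h) - gradient F x) h := by
        rw [inner_sub_left]
      have h2 : (inner ℝ (gradient F (x + s • h) - gradient F x) h : ℝ)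
          ≤ ‖gradient F (x + s • h) - gradient F x‖ * ‖h‖ := real_inner_le_norm _ _
      have h3 : ‖gradient F (x + s • h) - gradient F x‖ ≤ L * (s * ‖h‖) := by
        have := hLip (x + s • h) x
        simpa [norm_smul, abs_of_nonneg hs.1, mul_assoc] using this
      nlinarith [norm_nonneg h, hs.1]
  have hval : (∫ s in (0:ℝ)..1, ((inner ℝ (gradient F x) h : ℝ) + L * s * ‖h‖ ^ 2))
      = (inner ℝ (gradient F x) h : ℝ) + L / 2 * ‖h‖ ^ 2 := by
    rw [integral_add]
    · have e2 : (fun s : ℝ => L * s * ‖h‖ ^ 2) = fun s : ℝ => (L * ‖h‖ ^ 2) * s := by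
        funext s; ring
      rw [e2, integral_const_mul, integral_id, integral_const]
      norm_num
      ring
    · exact intervalIntegrable_const
    · exact (by continuity : Continuous fun s : ℝ => L * s * ‖h‖ ^ 2).intervalIntegrable 0 1
  linarith [hFTC, hmono, hval.le, hval.ge]


set_option maxHeartbeats 2000000 in
lemma halos_step
    {E : Type*} [NormedAddCommGroup E] [InnerProductSpace ℝ E] [CompleteSpace E]
    (F : E → ℝ) (L : ℝ) (hL : 0 < L)
    (hF : Differentiable ℝ F)
    (hLip : ∀ x y : E, ‖gradient F x - gradient F y‖ ≤ L * ‖x - y‖)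
    (β : ℝ) (hβ0 : 0 < β) (hβ1 : β < 1)
    (γ : ℝ) (hγ : γ = 1 + β ^ 2 / (1 - β))
    (Θ g m : ℕ → E) (η : ℕ → ℝ) (ηm η0 : ℝ)
    (hmrec : ∀ t : ℕ, m (t + 1) = β • m t + g t)
    (hΘrec : ∀ t : ℕ, Θ (t + 1) = Θ t - η t • ((1 - β) • g t + β • m (t + 1)))
    (hηm : 0 < ηm)
    (hηlb : ∀ t : ℕ, ηm ≤ η t) (hηub : ∀ t : ℕ, η t ≤ η0)
    (hη0 : η0 ≤ (γ - β ^ 2) / (6 * L * γ ^ 2))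
    (B : ℝ) (hB : 0 ≤ B)
    (hg : ∀ t : ℕ, ‖g t - gradient F (Θ t)‖ ^ 2 ≤ B)
    (hmom : ∀ t : ℕ, ‖m t - (1 - β)⁻¹ • g t‖ ^ 2 ≤ B) :
    ∀ t : ℕ, ηm * (γ - β ^ 2) / 4 * ‖gradient F (Θ t)‖ ^ 2
      ≤ F (Θ t) - F (Θ (t + 1))
        + η0 * ((γ + β ^ 2) / 2 + 3 / 2 * L * η0 * (γ ^ 2 + β ^ 4)) * B := by
  have hu : (0:ℝ) < 1 - β := by linarith
  have hγpos : 0 < γ := by rw [hγ]; positivity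
  have hγβ2 : 1 ≤ γ - β ^ 2 := by
    have : (0:ℝ) ≤ β ^ 3 / (1 - β) := by positivity
    have e2 : γ - β ^ 2 = 1 + β ^ 3 / (1 - β) := by
      rw [hγ]; field_simp; ring
    rw [e2]; linarith
  have hγβpos : 0 < γ - β ^ 2 := by linarith
  have hη00 : 0 < η0 := lt_of_lt_of_le hηm ((hηlb 0).trans (hηub 0))
  have hLη0 : L * η0 * γ ^ 2 ≤ (γ - β ^ 2) / 6 := by
    have h6 : (0:ℝ) < 6 * L * γ ^ 2 := by positivity
    have := (le_div_iff₀ h6).mp hη0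
    nlinarith
  have hkey2 : ∀ t : ℕ, ηm * (γ - β ^ 2) / 4 * ‖gradient F (Θ t)‖ ^ 2
      ≤ F (Θ t) - F (Θ (t + 1))
        + η0 * ((γ + β ^ 2) / 2 + 3 / 2 * L * η0 * (γ ^ 2 + β ^ 4)) * B := by
    intro t
    have hηt : 0 < η t := lt_of_lt_of_le hηm (hηlb t)
    have hηtu : η t ≤ η0 := hηub t
    have hdesc := descent_lemma F L hL.le hF hLip (Θ t) (Θ (t + 1))
    set G := gradient F (Θ t) with hG
    set δv := g t - G with hδv
    set ev := m t - (1 - β)⁻¹ • g t with hev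
    have hδB : ‖δv‖ ^ 2 ≤ B := hg t
    have heB : ‖ev‖ ^ 2 ≤ B := hmom t
    have hvec : Θ (t + 1) - Θ t = -(η t • (γ • G + γ • δv + β ^ 2 • ev)) := by
      have hu' : (1:ℝ) - β ≠ 0 := ne_of_gt hu
      rw [hΘrec t, hmrec t, hδv, hev, hγ]
      match_scalars <;> field_simp <;> (try ring) <;> tauto
    rw [hvec] at hdesc
    have hip : (inner ℝ G (-(η t • (γ • G + γ • δv + β ^ 2 • ev))) : ℝ)
        = -(η t * (γ * ‖G‖ ^ 2 + γ * inner ℝ G δv + β ^ 2 * inner ℝ G ev)) := by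
      rw [inner_neg_right, real_inner_smul_right, inner_add_right, inner_add_right,
        real_inner_smul_right, real_inner_smul_right, real_inner_smul_right,
        real_inner_self_eq_norm_sq]
      try ring
    rw [hip] at hdesc
    -- norm of the step
    have hnn : ‖-(η t • (γ • G + γ • δv + β ^ 2 • ev))‖
        ≤ η t * (γ * ‖G‖ + γ * ‖δv‖ + β ^ 2 * ‖ev‖) := by
      rw [norm_neg, norm_smul]
      have h1 : ‖γ • G + γ • δv + β ^ 2 • ev‖ ≤ γ * ‖G‖ + γ * ‖δv‖ + β ^ 2 * ‖ev‖ := by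
        calc ‖γ • G + γ • δv + β ^ 2 • ev‖
            ≤ ‖γ • G + γ • δv‖ + ‖β ^ 2 • ev‖ := norm_add_le _ _
          _ ≤ ‖γ • G‖ + ‖γ • δv‖ + ‖β ^ 2 • ev‖ := by
              have := norm_add_le (γ • G) (γ • δv); linarith
          _ = γ * ‖G‖ + γ * ‖δv‖ + β ^ 2 * ‖ev‖ := by
              rw [norm_smul, norm_smul, norm_smul, Real.norm_eq_abs, Real.norm_eq_abs,
                abs_of_pos hγpos, abs_of_nonneg (sq_nonneg β)]
      rw [Real.norm_eq_abs, abs_of_pos hηt]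
      exact mul_le_mul_of_nonneg_left h1 hηt.le
    have hsq1 : ‖-(η t • (γ • G + γ • δv + β ^ 2 • ev))‖ ^ 2
        ≤ (η t * (γ * ‖G‖ + γ * ‖δv‖ + β ^ 2 * ‖ev‖)) ^ 2 :=
      pow_le_pow_left₀ (norm_nonneg _) hnn 2
    have hsq2 : (γ * ‖G‖ + γ * ‖δv‖ + β ^ 2 * ‖ev‖) ^ 2
        ≤ 3 * γ ^ 2 * ‖G‖ ^ 2 + 3 * γ ^ 2 * B + 3 * β ^ 4 * B := by
      have b1 : 3 * γ ^ 2 * ‖δv‖ ^ 2 ≤ 3 * γ ^ 2 * B :=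
        mul_le_mul_of_nonneg_left hδB (by positivity)
      have b2 : 3 * β ^ 4 * ‖ev‖ ^ 2 ≤ 3 * β ^ 4 * B :=
        mul_le_mul_of_nonneg_left heB (by positivity)
      nlinarith [sq_nonneg (γ * ‖G‖ - γ * ‖δv‖), sq_nonneg (γ * ‖G‖ - β ^ 2 * ‖ev‖),
        sq_nonneg (γ * ‖δv‖ - β ^ 2 * ‖ev‖), b1, b2]
    have hsq : ‖-(η t • (γ • G + γ • δv + β ^ 2 • ev))‖ ^ 2
        ≤ η t ^ 2 * (3 * γ ^ 2 * ‖G‖ ^ 2 + 3 * γ ^ 2 * B + 3 * β ^ 4 * B) := by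
      calc ‖-(η t • (γ • G + γ • δv + β ^ 2 • ev))‖ ^ 2
          ≤ (η t * (γ * ‖G‖ + γ * ‖δv‖ + β ^ 2 * ‖ev‖)) ^ 2 := hsq1
        _ = η t ^ 2 * (γ * ‖G‖ + γ * ‖δv‖ + β ^ 2 * ‖ev‖) ^ 2 := by ring
        _ ≤ η t ^ 2 * (3 * γ ^ 2 * ‖G‖ ^ 2 + 3 * γ ^ 2 * B + 3 * β ^ 4 * B) :=
            mul_le_mul_of_nonneg_left hsq2 (sq_nonneg _)
    have c1 : L * η t * γ ^ 2 ≤ (γ - β ^ 2) / 6 := by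
      nlinarith [mul_le_mul_of_nonneg_right hηtu (by positivity : (0:ℝ) ≤ L * γ ^ 2)]
    have hquad : L / 2 * ‖-(η t • (γ • G + γ • δv + β ^ 2 • ev))‖ ^ 2
        ≤ η t * ((γ - β ^ 2) / 4) * ‖G‖ ^ 2
          + 3 / 2 * L * η t * η0 * (γ ^ 2 + β ^ 4) * B := by
      have h1 : L / 2 * ‖-(η t • (γ • G + γ • δv + β ^ 2 • ev))‖ ^ 2
          ≤ L / 2 * (η t ^ 2 * (3 * γ ^ 2 * ‖G‖ ^ 2 + 3 * γ ^ 2 * B + 3 * β ^ 4 * B)) :=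
        mul_le_mul_of_nonneg_left hsq (by positivity)
      have h2 : (3:ℝ) / 2 * (L * η t * γ ^ 2) * (η t * ‖G‖ ^ 2)
          ≤ 3 / 2 * ((γ - β ^ 2) / 6) * (η t * ‖G‖ ^ 2) := by
        have hnng : (0:ℝ) ≤ η t * ‖G‖ ^ 2 := by positivity
        nlinarith [mul_le_mul_of_nonneg_right c1 hnng]
      have h3 : (3:ℝ) / 2 * L * (η t * η t) * (γ ^ 2 + β ^ 4) * B
          ≤ 3 / 2 * L * (η t * η0) * (γ ^ 2 + β ^ 4) * B := by
        have : η t * η t ≤ η t * η0 := mul_le_mul_of_nonneg_left hηtu hηt.le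
        nlinarith [mul_le_mul_of_nonneg_right this
          (by positivity : (0:ℝ) ≤ 3 / 2 * L * (γ ^ 2 + β ^ 4) * B)]
      linarith [h1, h2, h3]
    have hb1 : -(inner ℝ G δv : ℝ) ≤ (‖G‖ ^ 2 + B) / 2 := by
      have := abs_real_inner_le_norm G δv
      have habs : -(inner ℝ G δv : ℝ) ≤ ‖G‖ * ‖δv‖ := by
        have := neg_abs_le (inner ℝ G δv : ℝ); linarith
      nlinarith [sq_nonneg (‖G‖ - ‖δv‖), hδB]
    have hb2 : -(inner ℝ G ev : ℝ) ≤ (‖G‖ ^ 2 + B) / 2 := by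
      have := abs_real_inner_le_norm G ev
      have habs : -(inner ℝ G ev : ℝ) ≤ ‖G‖ * ‖ev‖ := by
        have := neg_abs_le (inner ℝ G ev : ℝ); linarith
      nlinarith [sq_nonneg (‖G‖ - ‖ev‖), heB]
    have hb1' : -(η t * γ * (inner ℝ G δv : ℝ)) ≤ η t * γ * ((‖G‖ ^ 2 + B) / 2) := by
      have := mul_le_mul_of_nonneg_left hb1 (by positivity : (0:ℝ) ≤ η t * γ)
      linarith [this]
    have hb2' : -(η t * β ^ 2 * (inner ℝ G ev : ℝ)) ≤ η t * β ^ 2 * ((‖G‖ ^ 2 + B) / 2) := by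
      have := mul_le_mul_of_nonneg_left hb2 (by positivity : (0:ℝ) ≤ η t * β ^ 2)
      linarith [this]
    -- monotonicity in η
    have hA : ηm * (γ - β ^ 2) / 4 * ‖G‖ ^ 2 ≤ η t * ((γ - β ^ 2) / 4) * ‖G‖ ^ 2 := by
      have := mul_le_mul_of_nonneg_right (hηlb t)
        (by positivity : (0:ℝ) ≤ (γ - β ^ 2) / 4 * ‖G‖ ^ 2)
      nlinarith [this]
    have hN1 : η t * ((γ + β ^ 2) / 2) * B ≤ η0 * ((γ + β ^ 2) / 2) * B := by
      have := mul_le_mul_of_nonneg_right hηtu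
        (by positivity : (0:ℝ) ≤ (γ + β ^ 2) / 2 * B)
      nlinarith [this]
    have hN2 : 3 / 2 * L * η t * η0 * (γ ^ 2 + β ^ 4) * B
        ≤ 3 / 2 * L * η0 * η0 * (γ ^ 2 + β ^ 4) * B := by
      have := mul_le_mul_of_nonneg_right hηtu
        (by positivity : (0:ℝ) ≤ 3 / 2 * L * η0 * (γ ^ 2 + β ^ 4) * B)
      nlinarith [this]
    linarith [hdesc, hquad, hb1', hb2', hA, hN1, hN2]
  exact hkey2

/-- Convergence of the HALoS global-server momentum recursion (Theorem 1, descent form). -/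
theorem halos_convergence_paper_form
    {E : Type*} [NormedAddCommGroup E] [InnerProductSpace ℝ E] [CompleteSpace E]
    (F : E → ℝ) (L : ℝ) (hL : 0 < L)
    (hF : Differentiable ℝ F)
    (hLip : ∀ x y : E, ‖gradient F x - gradient F y‖ ≤ L * ‖x - y‖)
    (Fstar : ℝ) (hbdd : ∀ x : E, F x ≥ Fstar)
    (β : ℝ) (hβ0 : 0 < β) (hβ1 : β < 1)
    (γ : ℝ) (hγ : γ = 1 + β ^ 2 / (1 - β))
    (Θ g m : ℕ → E) (η : ℕ → ℝ) (ηm η0 : ℝ)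
    (hm0 : m 0 = 0)
    (hmrec : ∀ t : ℕ, m (t + 1) = β • m t + g t)
    (hΘrec : ∀ t : ℕ, Θ (t + 1) = Θ t - η t • ((1 - β) • g t + β • m (t + 1)))
    (hηm : 0 < ηm)
    (hηlb : ∀ t : ℕ, ηm ≤ η t) (hηub : ∀ t : ℕ, η t ≤ η0)
    (hη0 : η0 ≤ (γ - β ^ 2) / (6 * L * γ ^ 2))
    (B : ℝ) (hB : 0 ≤ B)
    (hg : ∀ t : ℕ, ‖g t - gradient F (Θ t)‖ ^ 2 ≤ B)
    (hmom : ∀ t : ℕ, ‖m t - (1 - β)⁻¹ • g t‖ ^ 2 ≤ B) :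
    ∀ T : ℕ, ∀ _hT : 1 ≤ T,
      (Finset.range T).inf' (Finset.nonempty_range_iff.mpr (by omega))
          (fun t => ‖gradient F (Θ t)‖ ^ 2)
        ≤ (4 * (F (Θ 0) - Fstar) / (ηm * T)) * (1 + 1 / (1 - β))
          + (η0 / (ηm * β ^ 3)) * (6 + 24 * L * η0 + 24 * L * η0 / (1 - β) ^ 2) * B := by
  have hu : (0:ℝ) < 1 - β := by linarith
  have hγpos : 0 < γ := by rw [hγ]; positivity
  have hγβ2 : 1 ≤ γ - β ^ 2 := by
    have : (0:ℝ) ≤ β ^ 3 / (1 - β) := by positivity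
    have e2 : γ - β ^ 2 = 1 + β ^ 3 / (1 - β) := by
      rw [hγ]; field_simp; ring
    rw [e2]; linarith
  have hγβpos : 0 < γ - β ^ 2 := by linarith
  have hη00 : 0 < η0 := lt_of_lt_of_le hηm ((hηlb 0).trans (hηub 0))
  have hLη0 : L * η0 * γ ^ 2 ≤ (γ - β ^ 2) / 6 := by
    have h6 : (0:ℝ) < 6 * L * γ ^ 2 := by positivity
    have := (le_div_iff₀ h6).mp hη0
    nlinarith
  have hkey := halos_step F L hL hF hLip β hβ0 hβ1 γ hγ Θ g m η ηm η0
    hmrec hΘrec hηm hηlb hηub hη0 B hB hg hmom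
  -- telescoping sum
  have hsum : ∀ n : ℕ, ηm * (γ - β ^ 2) / 4 * ∑ t ∈ Finset.range n, ‖gradient F (Θ t)‖ ^ 2
      ≤ F (Θ 0) - F (Θ n)
        + n * (η0 * ((γ + β ^ 2) / 2 + 3 / 2 * L * η0 * (γ ^ 2 + β ^ 4)) * B) := by
    intro n
    induction n with
    | zero => simp
    | succ n ih =>
      rw [Finset.sum_range_succ]
      have := hkey n
      push_cast
      nlinarith [this, ih]
  intro T hT
  have hTpos : (0:ℝ) < (T:ℝ) := by exact_mod_cast Nat.lt_of_lt_of_le Nat.zero_lt_one hT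
  set N := (Finset.range T).inf' (Finset.nonempty_range_iff.mpr (by omega))
      (fun t => ‖gradient F (Θ t)‖ ^ 2) with hN
  have hTN : (T:ℝ) * N ≤ ∑ t ∈ Finset.range T, ‖gradient F (Θ t)‖ ^ 2 := by
    have h1 : ∀ t ∈ Finset.range T, N ≤ ‖gradient F (Θ t)‖ ^ 2 := fun t ht =>
      Finset.inf'_le _ ht
    have := Finset.card_nsmul_le_sum (Finset.range T)
      (fun t => ‖gradient F (Θ t)‖ ^ 2) N h1
    simpa [nsmul_eq_mul] using this
  have hApos : (0:ℝ) < ηm * (γ - β ^ 2) / 4 := by positivity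
  have hmain : ηm * (γ - β ^ 2) / 4 * ((T:ℝ) * N)
      ≤ (F (Θ 0) - Fstar)
        + (T:ℝ) * (η0 * ((γ + β ^ 2) / 2 + 3 / 2 * L * η0 * (γ ^ 2 + β ^ 4)) * B) := by
    have h1 := mul_le_mul_of_nonneg_left hTN hApos.le
    have h2 := hsum T
    have h3 := hbdd (Θ T)
    linarith
  -- scalar facts
  have s2 : β ^ 3 ≤ (γ - β ^ 2) * (1 - β) := by
    have e : (γ - β ^ 2) * (1 - β) = 1 - β + β ^ 3 := by
      rw [hγ]; field_simp; ring
    rw [e]; linarith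
  have s3 : (1 - β) * (γ + β ^ 2) ≤ 2 := by
    have e : (1 - β) * (γ + β ^ 2) = (1 - β) * (1 + β ^ 2) + β ^ 2 := by
      rw [hγ]; field_simp; ring
    rw [e]; nlinarith
  have s4 : (1 - β) ^ 2 * (γ ^ 2 + β ^ 4) ≤ 2 * (1 - β) ^ 2 + 2 := by
    have e : (1 - β) ^ 2 * γ ^ 2 = (1 - β + β ^ 2) ^ 2 := by
      rw [hγ]; field_simp; try ring
    nlinarith [e, sq_nonneg (1 - β), sq_nonneg β, sq_nonneg (β * (1 - β)),
      sq_nonneg (1 - β - β ^ 2), sq_nonneg (β ^ 2 * (1 - β))]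
  have q : (1 - β) * (γ ^ 2 + β ^ 4) ≤ 4 + 4 / (1 - β) ^ 2 := by
    have hpos2 : (0:ℝ) < (1 - β) ^ 2 := by positivity
    have h4 : (1 - β) * (γ ^ 2 + β ^ 4) - 4 ≤ 4 / (1 - β) ^ 2 := by
      rw [le_div_iff₀ hpos2]
      nlinarith [mul_le_mul_of_nonneg_left s4 hu.le, hu, hβ1, hβ0, sq_nonneg (1 - β)]
    linarith
  -- combine into the core coefficient inequality
  have p1 : 2 * β ^ 3 * (γ + β ^ 2) ≤ 6 * (γ - β ^ 2) := by
    have h1 : β ^ 3 * (γ + β ^ 2) ≤ (γ - β ^ 2) * ((1 - β) * (γ + β ^ 2)) := by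
      have hnng : (0:ℝ) ≤ γ + β ^ 2 := by positivity
      nlinarith [mul_le_mul_of_nonneg_right s2 hnng]
    have h2 : (γ - β ^ 2) * ((1 - β) * (γ + β ^ 2)) ≤ (γ - β ^ 2) * 2 :=
      mul_le_mul_of_nonneg_left s3 hγβpos.le
    nlinarith [h1, h2]
  have r3 : β ^ 3 * (γ ^ 2 + β ^ 4) ≤ (γ - β ^ 2) * (4 + 4 / (1 - β) ^ 2) := by
    have h1 : β ^ 3 * (γ ^ 2 + β ^ 4) ≤ (γ - β ^ 2) * ((1 - β) * (γ ^ 2 + β ^ 4)) := by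
      have hnng : (0:ℝ) ≤ γ ^ 2 + β ^ 4 := by positivity
      nlinarith [mul_le_mul_of_nonneg_right s2 hnng]
    have h2 : (γ - β ^ 2) * ((1 - β) * (γ ^ 2 + β ^ 4))
        ≤ (γ - β ^ 2) * (4 + 4 / (1 - β) ^ 2) :=
      mul_le_mul_of_nonneg_left q hγβpos.le
    linarith
  have htotal : 2 * β ^ 3 * (γ + β ^ 2) + 6 * β ^ 3 * (L * η0) * (γ ^ 2 + β ^ 4)
      ≤ (γ - β ^ 2) * (6 + 24 * L * η0 + 24 * L * η0 / (1 - β) ^ 2) := by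
    have hLη : (0:ℝ) ≤ 6 * (L * η0) := by positivity
    have h2 := mul_le_mul_of_nonneg_left r3 hLη
    ring_nf at h2 ⊢
    linarith [p1, h2]
  have hcore : η0 * ((γ + β ^ 2) / 2 + 3 / 2 * L * η0 * (γ ^ 2 + β ^ 4))
      ≤ ηm * (γ - β ^ 2) / 4
        * (η0 / (ηm * β ^ 3) * (6 + 24 * L * η0 + 24 * L * η0 / (1 - β) ^ 2)) := by
    have hrw : ηm * (γ - β ^ 2) / 4
        * (η0 / (ηm * β ^ 3) * (6 + 24 * L * η0 + 24 * L * η0 / (1 - β) ^ 2))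
        = (γ - β ^ 2) * η0 * (6 + 24 * L * η0 + 24 * L * η0 / (1 - β) ^ 2) / (4 * β ^ 3) := by
      field_simp
    rw [hrw, le_div_iff₀ (by positivity : (0:ℝ) < 4 * β ^ 3)]
    have := mul_le_mul_of_nonneg_left htotal hη00.le
    nlinarith [this]
  -- final assembly
  have h1 : F (Θ 0) - Fstar
      ≤ ηm * (γ - β ^ 2) / 4 * (T:ℝ)
        * (4 * (F (Θ 0) - Fstar) / (ηm * (T:ℝ)) * (1 + 1 / (1 - β))) := by
    have e1 : ηm * (γ - β ^ 2) / 4 * (T:ℝ)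
        * (4 * (F (Θ 0) - Fstar) / (ηm * (T:ℝ)) * (1 + 1 / (1 - β)))
        = (F (Θ 0) - Fstar) * ((γ - β ^ 2) * (1 + 1 / (1 - β))) := by
      field_simp
    rw [e1]
    have hF0 : 0 ≤ F (Θ 0) - Fstar := by have := hbdd (Θ 0); linarith
    have hge1 : 1 ≤ (γ - β ^ 2) * (1 + 1 / (1 - β)) := by
      have : (0:ℝ) < 1 / (1 - β) := by positivity
      nlinarith [hγβ2]
    nlinarith [hF0, hge1]
  have h2 : (T:ℝ) * (η0 * ((γ + β ^ 2) / 2 + 3 / 2 * L * η0 * (γ ^ 2 + β ^ 4)) * B)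
      ≤ ηm * (γ - β ^ 2) / 4 * (T:ℝ)
        * (η0 / (ηm * β ^ 3) * (6 + 24 * L * η0 + 24 * L * η0 / (1 - β) ^ 2) * B) := by
    have := mul_le_mul_of_nonneg_right hcore hB
    nlinarith [mul_le_mul_of_nonneg_left this hTpos.le]
  have hfin : ηm * (γ - β ^ 2) / 4 * (T:ℝ) * N
      ≤ ηm * (γ - β ^ 2) / 4 * (T:ℝ)
        * (4 * (F (Θ 0) - Fstar) / (ηm * (T:ℝ)) * (1 + 1 / (1 - β))
          + η0 / (ηm * β ^ 3) * (6 + 24 * L * η0 + 24 * L * η0 / (1 - β) ^ 2) * B) := by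
    rw [mul_add]
    nlinarith [hmain, h1, h2]
  have hpos : (0:ℝ) < ηm * (γ - β ^ 2) / 4 * (T:ℝ) := by positivity
  have := le_of_mul_le_mul_left (by linarith [hfin] :
    ηm * (γ - β ^ 2) / 4 * (T:ℝ) * N
      ≤ ηm * (γ - β ^ 2) / 4 * (T:ℝ)
        * (4 * (F (Θ 0) - Fstar) / (ηm * (T:ℝ)) * (1 + 1 / (1 - β))
          + η0 / (ηm * β ^ 3) * (6 + 24 * L * η0 + 24 * L * η0 / (1 - β) ^ 2) * B)) hpos
  calc N ≤ _ := this
    _ = (4 * (F (Θ 0) - Fstar) / (ηm * (T:ℝ))) * (1 + 1 / (1 - β))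
        + (η0 / (ηm * β ^ 3)) * (6 + 24 * L * η0 + 24 * L * η0 / (1 - β) ^ 2) * B := by
      ring
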